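/- Let l be a natural number, a an integer coprime to l, and k any integer. Then |∑_{b mod l} e((ab² + kb)/l)| ≤ 2√l. -/

import Mathlib

open Complex Finset

lemma stdAddChar_conj {l : ℕ} [NeZero l] (x : ZMod l) :
    (starRingEnd ℂ) (ZMod.stdAddChar x) = ZMod.stdAddChar (-x) := by
  rw [ZMod.stdAddChar_apply, ZMod.stdAddChar_apply, AddChar.map_neg_eq_inv,
    Circle.coe_inv_eq_conj]

lemma card_two_torsion_le {l : ℕ} [NeZero l] :
    (Finset.univ.filter (fun h : ZMod l => 2 * h = 0)).card ≤ 2 := by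
  classical
  have hsub : (Finset.univ.filter (fun h : ZMod l => 2 * h = 0)) ⊆
      {(0 : ZMod l), ((l / 2 : ℕ) : ZMod l)} := by
    intro h hh
    simp only [Finset.mem_filter, Finset.mem_univ, true_and] at hh
    have h2 : ((2 * h.val : ℕ) : ZMod l) = 0 := by
      push_cast
      rw [ZMod.natCast_val, ZMod.cast_id]
      exact hh
    rw [ZMod.natCast_eq_zero_iff] at h2
    have hlt : h.val < l := ZMod.val_lt h
    rcases h2 with ⟨c, hc⟩
    have hl : 0 < l := Nat.pos_of_ne_zero (NeZero.ne l)
    have hc2 : c < 2 := by nlinarith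
    interval_cases c
    · simp only [Finset.mem_insert, Finset.mem_singleton]
      left
      exact (ZMod.val_eq_zero h).mp (by omega)
    · have : h.val = l / 2 := by omega
      simp only [Finset.mem_insert, Finset.mem_singleton]
      right
      rw [← this, ZMod.natCast_val, ZMod.cast_id]
  exact le_trans (Finset.card_le_card hsub) (le_trans (Finset.card_insert_le _ _) (by simp))

theorem quadratic_gauss_sum_bound
    (l : ℕ) [NeZero l] (a k : ℤ) (ha : IsCoprime a (l : ℤ)) :
    ‖∑ b : ZMod l,
        Complex.exp (2 * Real.pi * I * (a * (b.val : ℂ) ^ 2 + k * (b.val : ℂ)) / l)‖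
      ≤ 2 * Real.sqrt l := by
  classical
  set ψ : AddChar (ZMod l) ℂ := ZMod.stdAddChar with hψ
  -- rewrite the summand
  have hsummand : ∀ b : ZMod l,
      Complex.exp (2 * Real.pi * I * (a * (b.val : ℂ) ^ 2 + k * (b.val : ℂ)) / l)
        = ψ (a * b ^ 2 + k * b) := by
    intro b
    have h1 : ψ ((a * (b.val : ℤ) ^ 2 + k * (b.val : ℤ) : ℤ) : ZMod l)
        = Complex.exp (2 * Real.pi * I * ((a * (b.val : ℤ) ^ 2 + k * (b.val : ℤ) : ℤ) : ℂ) / l) :=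
      ZMod.stdAddChar_coe _
    have h2 : ((a * (b.val : ℤ) ^ 2 + k * (b.val : ℤ) : ℤ) : ZMod l) = a * b ^ 2 + k * b := by
      push_cast
      rw [ZMod.natCast_val, ZMod.cast_id]
    rw [h2] at h1
    rw [h1]
    push_cast
    ring_nf
  set S : ℂ := ∑ b : ZMod l, ψ (a * b ^ 2 + k * b) with hS
  rw [show (∑ b : ZMod l,
      Complex.exp (2 * Real.pi * I * (a * (b.val : ℂ) ^ 2 + k * (b.val : ℂ)) / l)) = S from
    Finset.sum_congr rfl (fun b _ => hsummand b)]
  -- compute |S|^2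
  have key : S * (starRingEnd ℂ) S
      = ∑ h : ZMod l, ψ (a * h ^ 2 + k * h) * (if (2 * a * h : ZMod l) = 0 then (l : ℂ) else 0) := by
    rw [hS, map_sum, Finset.sum_mul_sum]
    have step1 : ∀ c : ZMod l, ∀ b : ZMod l,
        ψ (a * b ^ 2 + k * b) * (starRingEnd ℂ) (ψ (a * c ^ 2 + k * c))
          = ψ (a * b ^ 2 + k * b - (a * c ^ 2 + k * c)) := by
      intro c b
      rw [hψ, stdAddChar_conj, ← AddChar.map_add_eq_mul]
      ring_nf
    calc (∑ b : ZMod l, ∑ c : ZMod l,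
            ψ (a * b ^ 2 + k * b) * (starRingEnd ℂ) (ψ (a * c ^ 2 + k * c)))
        = ∑ c : ZMod l, ∑ b : ZMod l, ψ (a * b ^ 2 + k * b - (a * c ^ 2 + k * c)) := by
          rw [Finset.sum_comm]
          exact Finset.sum_congr rfl fun c _ => Finset.sum_congr rfl fun b _ => step1 c b
      _ = ∑ c : ZMod l, ∑ h : ZMod l, ψ (a * h ^ 2 + k * h) * ψ (c * (2 * a * h)) := by
          refine Finset.sum_congr rfl fun c _ => ?_
          rw [← Equiv.sum_comp (Equiv.addRight c)
            (fun b => ψ (a * b ^ 2 + k * b - (a * c ^ 2 + k * c)))]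
          refine Finset.sum_congr rfl fun h _ => ?_
          simp only [Equiv.coe_addRight]
          rw [← AddChar.map_add_eq_mul]
          ring_nf
      _ = ∑ h : ZMod l, ψ (a * h ^ 2 + k * h) * ∑ c : ZMod l, ψ (c * (2 * a * h)) := by
          rw [Finset.sum_comm]
          exact Finset.sum_congr rfl fun h _ => (Finset.mul_sum _ _ _).symm
      _ = ∑ h : ZMod l, ψ (a * h ^ 2 + k * h) * (if (2 * a * h : ZMod l) = 0 then (l : ℂ) else 0) := by
          refine Finset.sum_congr rfl fun h _ => ?_
          rw [AddChar.sum_mulShift _ (ZMod.isPrimitive_stdAddChar l)]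
          simp [ZMod.card]
  -- a is a unit mod l
  have haunit : IsUnit ((a : ZMod l)) := by
    obtain ⟨u, v, huv⟩ := ha
    have : ((u * a + v * l : ℤ) : ZMod l) = 1 := by rw [huv]; norm_cast
    push_cast at this
    rw [ZMod.natCast_self, mul_zero, add_zero] at this
    exact IsUnit.of_mul_eq_one _ (by rw [mul_comm]; exact this)
  -- condition simplification
  have hcond : ∀ h : ZMod l, ((2 * a * h : ZMod l) = 0) ↔ (2 * h = 0) := by
    intro h
    rw [show (2 * (a : ZMod l) * h) = (a : ZMod l) * (2 * h) by ring]
    exact haunit.mul_right_eq_zero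
  -- bound |S|^2
  have hbound : ‖S‖ ^ 2 ≤ 2 * l := by
    have h1 : ‖S‖ ^ 2 = ‖S * (starRingEnd ℂ) S‖ := by
      rw [norm_mul, Complex.norm_conj, sq]
    rw [h1, key]
    calc ‖∑ h : ZMod l, ψ (a * h ^ 2 + k * h) *
            (if (2 * a * h : ZMod l) = 0 then (l : ℂ) else 0)‖
        ≤ ∑ h : ZMod l, ‖ψ (a * h ^ 2 + k * h) *
            (if (2 * a * h : ZMod l) = 0 then (l : ℂ) else 0)‖ := by
          exact norm_sum_le _ _
      _ ≤ ∑ h : ZMod l, (if (2 * h : ZMod l) = 0 then (l : ℝ) else 0) := by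
          refine Finset.sum_le_sum fun h _ => ?_
          rw [norm_mul]
          have habs1 : ‖ψ (a * h ^ 2 + k * h)‖ = 1 := by
            rw [hψ, ZMod.stdAddChar_apply]; exact Circle.norm_coe _
          rw [habs1, one_mul]
          by_cases hc2 : (2 : ZMod l) * h = 0
          · rw [if_pos ((hcond h).mpr hc2), if_pos hc2]
            simp [Complex.norm_natCast]
          · rw [if_neg (fun hx => hc2 ((hcond h).mp hx)), if_neg hc2]
            simp
      _ = ((Finset.univ.filter (fun h : ZMod l => 2 * h = 0)).card : ℝ) * l := by
          rw [← Finset.sum_filter, Finset.sum_const, nsmul_eq_mul]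
      _ ≤ 2 * l := by
          have := card_two_torsion_le (l := l)
          have hl : (0:ℝ) ≤ (l:ℝ) := Nat.cast_nonneg l
          exact mul_le_mul_of_nonneg_right (by exact_mod_cast this) hl
  -- finish
  have h4 : ‖S‖ ^ 2 ≤ (2 * Real.sqrt l) ^ 2 := by
    have : (2 * Real.sqrt l) ^ 2 = 4 * l := by
      rw [mul_pow, Real.sq_sqrt (Nat.cast_nonneg l)]; norm_num
    rw [this]
    nlinarith [hbound, Nat.cast_nonneg (α := ℝ) l]
  have habs : (0:ℝ) ≤ ‖S‖ := norm_nonneg _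
  have hrhs : (0:ℝ) ≤ 2 * Real.sqrt l := by positivity
  calc ‖S‖ = Real.sqrt (‖S‖ ^ 2) := (Real.sqrt_sq habs).symm
    _ ≤ Real.sqrt ((2 * Real.sqrt l) ^ 2) := Real.sqrt_le_sqrt h4
    _ = 2 * Real.sqrt l := Real.sqrt_sq hrhs
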